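/- Fix b, h > 0 and 0 < λ < 1 ≤ M, and let ρ = b/(b+h). For every Borel measurable policy π : ℝ^N → [0, M] acting on N censored samples, the supremum over demand distributions G ∈ 𝒢 with G⁻(λ) > ρ of E_{D_1,…,D_N i.i.d. ∼ G}[ Regret_G(π(min(D_1,λ), …, min(D_N,λ))) − Δ_G ] is at least λ·(b+h)·√(1−ρ)·min(ρ, 1−ρ)·e^{−1/2} / (64·√N). -/

import Mathlib

open MeasureTheory Set

/-- Newsvendor cost of ordering quantity `q` under demand distribution `F`,
with underage cost `b` and overage cost `h`. -/
noncomputable def nvCost (b h : ℝ) (F : Measure ℝ) (q : ℝ) : ℝ :=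
  ∫ x, (b * max (x - q) 0 + h * max (q - x) 0) ∂F

/-- Optimal newsvendor quantity: the `ρ`-th quantile of `F`. -/
noncomputable def qStar (ρ : ℝ) (F : Measure ℝ) : ℝ :=
  sInf {q : ℝ | ρ ≤ (F (Iic q)).toReal}

/-- The set `𝒢` of admissible demand distributions: Borel probability measures on ℝ
supported on `[0, ∞)` with finite mean and optimal newsvendor quantity at most `M`. -/
def GoodDist (ρ M : ℝ) : Set (Measure ℝ) :=
  {F | IsProbabilityMeasure F ∧ F (Iio 0) = 0 ∧ Integrable id F ∧ qStar ρ F ≤ M}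

/-- The ambiguity set `𝒜_λ`: all admissible distributions agreeing with `G` before `lam`. -/
def Ambig (ρ M : ℝ) (G : Measure ℝ) (lam : ℝ) : Set (Measure ℝ) :=
  {F | F ∈ GoodDist ρ M ∧ ∀ x < lam, F (Iic x) = G (Iic x)}

/-- Worst-case regret of an ordering quantity `q` over the ambiguity set. -/
noncomputable def Regret (b h ρ M : ℝ) (G : Measure ℝ) (lam q : ℝ) : ℝ :=
  sSup ((fun F => nvCost b h F q - nvCost b h F (qStar ρ F)) '' Ambig ρ M G lam)

/-- Minimax risk `Δ`. -/
noncomputable def Risk (b h ρ M : ℝ) (G : Measure ℝ) (lam : ℝ) : ℝ :=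
  sInf (Regret b h ρ M G lam '' Icc 0 M)

/-- The unidentifiable ordering quantity `q†_G`. -/
noncomputable def qDagger (b h M : ℝ) (G : Measure ℝ) (lam : ℝ) : ℝ :=
  (b * M + h * lam - (b + h) * (G (Iio lam)).toReal * M) /
    ((b + h) * (1 - (G (Iio lam)).toReal))

/-- The two-point-tail distribution `F_p`: agrees with `G` on `[0, λ)`, places an atom
of mass `p` at `λ` and an atom of mass `1 - p - G⁻(λ)` at `M`. -/
noncomputable def Fp (G : Measure ℝ) (lam M p : ℝ) : Measure ℝ :=
  G.restrict (Iio lam) + ENNReal.ofReal p • Measure.dirac lam +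
    ENNReal.ofReal (1 - p - (G (Iio lam)).toReal) • Measure.dirac M

/-- The `N`-fold product (i.i.d.) measure of `G` (equal to `Measure.pi` whenever `G`
is sigma-finite, in particular for probability measures). -/
noncomputable def iidPi (N : ℕ) (G : Measure ℝ) : Measure (Fin N → ℝ) := by
  classical
  exact if h : SigmaFinite G then
    haveI := h
    Measure.pi fun _ => G
  else 0

section AuxStmt17

open Finset

namespace Stmt17Aux

/-! ### Weighted sums of Dirac measures -/

lemma integrable_smul_dirac {α : Type*} [MeasurableSpace α] [MeasurableSingletonClass α]
    (f : α → ℝ) (a : α) (c : ENNReal) (hc : c ≠ ⊤) :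
    Integrable f (c • Measure.dirac a) := by
  have h1 : f =ᵐ[Measure.dirac a] (fun _ => f a) := by
    rw [MeasureTheory.ae_dirac_eq]; exact Filter.eventually_pure.2 rfl
  have h2 : f =ᵐ[c • Measure.dirac a] (fun _ => f a) := Measure.ae_smul_measure h1 c
  haveI : IsFiniteMeasure (c • Measure.dirac a) := by
    constructor
    rw [Measure.smul_apply, smul_eq_mul]
    exact ENNReal.mul_lt_top hc.lt_top (measure_lt_top _ _)
  exact (integrable_const (f a)).congr h2.symm

lemma indicator_univ_pi {ι : Type*} [Fintype ι] {β : ι → Type*} (s : ∀ i, Set (β i))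
    (y : ∀ i, β i) :
    (Set.univ.pi s).indicator (1 : (∀ i, β i) → ENNReal) y = ∏ i, (s i).indicator 1 (y i) := by
  by_cases h : ∀ i, y i ∈ s i
  · rw [Set.indicator_of_mem (Set.mem_univ_pi.2 h)]
    rw [Finset.prod_congr rfl fun i _ => Set.indicator_of_mem (h i) 1]
    simp
  · push_neg at h
    obtain ⟨i, hi⟩ := h
    rw [Set.indicator_of_notMem (fun hy => hi (Set.mem_univ_pi.1 hy i))]
    exact (Finset.prod_eq_zero (Finset.mem_univ i)
      (by simp [Set.indicator_of_notMem hi])).symm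

/-! ### Finitely-atomic measures on `ℝ` -/

noncomputable def matom {n : ℕ} (w v : Fin n → ℝ) : Measure ℝ :=
  ∑ k, ENNReal.ofReal (w k) • Measure.dirac (v k)

lemma matom_apply {n : ℕ} (w v : Fin n → ℝ) (s : Set ℝ) :
    matom w v s = ∑ k, ENNReal.ofReal (w k) * s.indicator 1 (v k) := by
  rw [matom, Measure.finset_sum_apply]
  exact Finset.sum_congr rfl fun k _ => by
    rw [Measure.smul_apply, Measure.dirac_apply, smul_eq_mul]

lemma integrable_matom {n : ℕ} (w v : Fin n → ℝ) (f : ℝ → ℝ) :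
    Integrable f (matom w v) := by
  rw [matom]
  exact integrable_finset_sum_measure.2 fun k _ =>
    integrable_smul_dirac f (v k) _ ENNReal.ofReal_ne_top

lemma integral_matom {n : ℕ} (w v : Fin n → ℝ) (hw : ∀ k, 0 ≤ w k) (f : ℝ → ℝ) :
    ∫ x, f x ∂(matom w v) = ∑ k, w k * f (v k) := by
  rw [matom, integral_finset_sum_measure (fun k _ =>
    integrable_smul_dirac f (v k) _ ENNReal.ofReal_ne_top)]
  refine Finset.sum_congr rfl fun k _ => ?_
  rw [integral_smul_measure, integral_dirac, smul_eq_mul, ENNReal.toReal_ofReal (hw k)]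

lemma pi_matom {n N : ℕ} (w v : Fin n → ℝ) :
    Measure.pi (fun _ : Fin N => matom w v) =
      ∑ x : Fin N → Fin n,
        (∏ i, ENNReal.ofReal (w (x i))) • Measure.dirac (fun i => v (x i)) := by
  haveI : IsFiniteMeasure (matom w v) := by
    constructor
    rw [matom_apply]
    refine ENNReal.sum_lt_top.2 fun k _ => ?_
    exact ENNReal.mul_lt_top ENNReal.ofReal_lt_top
      (by simp : ((Set.univ : Set ℝ).indicator 1 (v k) : ENNReal) < ⊤)
  refine Measure.pi_eq fun s hs => ?_
  rw [Measure.finset_sum_apply]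
  have key : ∀ x : Fin N → Fin n,
      ((∏ i, ENNReal.ofReal (w (x i))) • Measure.dirac (fun i => v (x i))) (Set.univ.pi s)
        = ∏ i, (ENNReal.ofReal (w (x i)) * (s i).indicator 1 (v (x i))) := by
    intro x
    rw [Measure.smul_apply, Measure.dirac_apply, smul_eq_mul,
      indicator_univ_pi s (fun i => v (x i)), Finset.prod_mul_distrib]
  rw [Finset.sum_congr rfl fun x _ => key x]
  have hps := Finset.prod_univ_sum (fun _ : Fin N => (Finset.univ : Finset (Fin n)))
    (fun i k => ENNReal.ofReal (w k) * (s i).indicator 1 (v k))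
  rw [Fintype.piFinset_univ] at hps
  rw [← hps]
  exact Finset.prod_congr rfl fun i _ => (matom_apply w v (s i)).symm

/-! ### Three-atom measures -/

lemma matom3_apply (w0 w1 w2 a M : ℝ) (s : Set ℝ) :
    matom ![w0, w1, w2] ![0, a, M] s =
      ENNReal.ofReal w0 * s.indicator 1 0 + ENNReal.ofReal w1 * s.indicator 1 a
        + ENNReal.ofReal w2 * s.indicator 1 M := by
  rw [matom_apply, Fin.sum_univ_three]
  simp

lemma matom3_prob (w0 w1 w2 a M : ℝ) (hw0 : 0 ≤ w0) (hw1 : 0 ≤ w1) (hw2 : 0 ≤ w2)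
    (hsum : w0 + w1 + w2 = 1) :
    IsProbabilityMeasure (matom ![w0, w1, w2] ![0, a, M]) := by
  constructor
  rw [matom3_apply]
  simp only [Set.indicator_univ, Pi.one_apply, mul_one]
  rw [← ENNReal.ofReal_add hw0 hw1, ← ENNReal.ofReal_add (by linarith) hw2, hsum,
    ENNReal.ofReal_one]

lemma matom3_Iio_zero (w0 w1 w2 a M : ℝ) (ha : 0 < a) (haM : a < M) :
    matom ![w0, w1, w2] ![0, a, M] (Iio 0) = 0 := by
  rw [matom3_apply]
  rw [Set.indicator_of_notMem (by simp : (0:ℝ) ∉ Iio (0:ℝ)),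
    Set.indicator_of_notMem (by simp [not_lt, ha.le] : a ∉ Iio (0:ℝ)),
    Set.indicator_of_notMem (by simp [not_lt]; linarith : M ∉ Iio (0:ℝ))]
  simp

lemma matom3_Iic_lo (w0 w1 w2 a M : ℝ) (haM : a < M) {q : ℝ} (hq0 : 0 ≤ q) (hqa : q < a) :
    matom ![w0, w1, w2] ![0, a, M] (Iic q) = ENNReal.ofReal w0 := by
  rw [matom3_apply]
  rw [Set.indicator_of_mem (by simpa using hq0 : (0:ℝ) ∈ Iic q),
    Set.indicator_of_notMem (by simp [not_le.2 hqa] : a ∉ Iic q),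
    Set.indicator_of_notMem (by simp; linarith : M ∉ Iic q)]
  simp

lemma matom3_Iic_mid (w0 w1 w2 a M : ℝ) {q : ℝ} (hq0 : 0 ≤ q) (hqa : a ≤ q) (hqM : q < M) :
    matom ![w0, w1, w2] ![0, a, M] (Iic q) =
      ENNReal.ofReal w0 + ENNReal.ofReal w1 := by
  rw [matom3_apply]
  rw [Set.indicator_of_mem (by simpa using hq0 : (0:ℝ) ∈ Iic q),
    Set.indicator_of_mem (by simpa using hqa : a ∈ Iic q),
    Set.indicator_of_notMem (by simp [not_le.2 hqM] : M ∉ Iic q)]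
  simp

lemma matom3_Iio_mid (w0 w1 w2 a M : ℝ) (ha : 0 < a) {q : ℝ} (hq : a < q) (hqM : q ≤ M) :
    matom ![w0, w1, w2] ![0, a, M] (Iio q) =
      ENNReal.ofReal w0 + ENNReal.ofReal w1 := by
  rw [matom3_apply]
  rw [Set.indicator_of_mem (by simp; linarith [ha, hq] : (0:ℝ) ∈ Iio q),
    Set.indicator_of_mem (by simpa using hq : a ∈ Iio q),
    Set.indicator_of_notMem (by simp [not_lt.2 hqM] : M ∉ Iio q)]
  simp

lemma nvCost_matom3 (b h w0 w1 w2 a M q : ℝ) (hw0 : 0 ≤ w0) (hw1 : 0 ≤ w1) (hw2 : 0 ≤ w2) :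
    nvCost b h (matom ![w0, w1, w2] ![0, a, M]) q =
      w0 * (b * max (0 - q) 0 + h * max (q - 0) 0)
      + w1 * (b * max (a - q) 0 + h * max (q - a) 0)
      + w2 * (b * max (M - q) 0 + h * max (q - M) 0) := by
  rw [nvCost, integral_matom _ _ (by
    intro k
    fin_cases k <;> simpa using by assumption)]
  rw [Fin.sum_univ_three]
  simp

/-! ### Generic newsvendor estimates -/

lemma integrable_nvInt (F : Measure ℝ) [IsFiniteMeasure F] (hint : Integrable id F)
    (b h q : ℝ) :
    Integrable (fun x => b * max (x - q) 0 + h * max (q - x) 0) F := by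
  have h1 : Integrable (fun x : ℝ => x - q) F := hint.sub (integrable_const q)
  have h2 : Integrable (fun x : ℝ => q - x) F := (integrable_const q).sub hint
  exact (((h1.sup (integrable_const 0)).const_mul b).add
    ((h2.sup (integrable_const 0)).const_mul h))

lemma nv_pointwise_lip (b h q q' x : ℝ) (hb : 0 ≤ b) (hh : 0 ≤ h) :
    (b * max (x - q) 0 + h * max (q - x) 0) - (b * max (x - q') 0 + h * max (q' - x) 0)
      ≤ (b + h) * |q - q'| := by
  have h1 := abs_max_sub_max_le_abs (x - q) (x - q') 0
  have h2 := abs_max_sub_max_le_abs (q - x) (q' - x) 0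
  have e1 : |x - q - (x - q')| = |q - q'| := by
    rw [show x - q - (x - q') = -(q - q') by ring, abs_neg]
  have e2 : |q - x - (q' - x)| = |q - q'| := by
    rw [show q - x - (q' - x) = q - q' by ring]
  rw [e1] at h1
  rw [e2] at h2
  have h1' : max (x - q) 0 - max (x - q') 0 ≤ |q - q'| := le_trans (le_abs_self _) h1
  have h2' : max (q - x) 0 - max (q' - x) 0 ≤ |q - q'| := le_trans (le_abs_self _) h2
  nlinarith [mul_le_mul_of_nonneg_left h1' hb, mul_le_mul_of_nonneg_left h2' hh]

lemma nvCost_sub_le (b h : ℝ) (hb : 0 ≤ b) (hh : 0 ≤ h) (F : Measure ℝ)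
    [IsProbabilityMeasure F] (hint : Integrable id F) (q q' : ℝ) :
    nvCost b h F q - nvCost b h F q' ≤ (b + h) * |q - q'| := by
  rw [nvCost, nvCost, ← integral_sub (integrable_nvInt F hint b h q)
    (integrable_nvInt F hint b h q')]
  calc ∫ x, ((b * max (x - q) 0 + h * max (q - x) 0)
        - (b * max (x - q') 0 + h * max (q' - x) 0)) ∂F
      ≤ ∫ _, (b + h) * |q - q'| ∂F := by
        refine integral_mono (((integrable_nvInt F hint b h q)).sub
          ((integrable_nvInt F hint b h q'))) (integrable_const _) ?_
        intro x
        exact nv_pointwise_lip b h q q' x hb hh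
    _ = (b + h) * |q - q'| := by
        rw [integral_const, probReal_univ, one_smul]

lemma qStar_nonneg (F : Measure ℝ) (h0 : F (Iio 0) = 0) {ρ : ℝ} (hρ : 0 < ρ) :
    0 ≤ qStar ρ F := by
  apply Real.sInf_nonneg
  intro q hq
  by_contra hq0
  push_neg at hq0
  have hz : F (Iic q) = 0 := measure_mono_null (Iic_subset_Iio.2 (by linarith)) h0
  rw [mem_setOf_eq, hz] at hq
  simp at hq
  linarith

lemma qStar_eq_of (F : Measure ℝ) [IsProbabilityMeasure F] (ρ t : ℝ)
    (hmem : ρ ≤ (F (Iic t)).toReal) (hlt : ∀ q < t, (F (Iic q)).toReal < ρ) :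
    qStar ρ F = t := by
  have hset : {q : ℝ | ρ ≤ (F (Iic q)).toReal} = Ici t := by
    ext q
    constructor
    · intro hq
      by_contra hc
      rw [Set.mem_Ici, not_le] at hc
      exact absurd hq (not_le.2 (hlt q hc))
    · intro hq
      exact le_trans hmem (ENNReal.toReal_mono (measure_ne_top F _)
        (measure_mono (Iic_subset_Iic.2 hq)))
  rw [qStar, hset, csInf_Ici]

/-! ### Regret and Risk estimates -/

lemma ambig_self {ρ M lam : ℝ} {G : Measure ℝ} (hG : G ∈ GoodDist ρ M) :
    G ∈ Ambig ρ M G lam := ⟨hG, fun _ _ => rfl⟩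

lemma nv_diff_le {b h ρ M lam : ℝ} (hb : 0 < b) (hh : 0 < h) (hρ0 : 0 < ρ)
    {G F : Measure ℝ} (hF : F ∈ Ambig ρ M G lam) {q : ℝ} (hq : q ∈ Icc 0 M) :
    nvCost b h F q - nvCost b h F (qStar ρ F) ≤ (b + h) * M := by
  obtain ⟨⟨hprob, h0, hint, hqM⟩, _⟩ := hF
  haveI := hprob
  have h1 := nvCost_sub_le b h hb.le hh.le F hint q (qStar ρ F)
  have hq0 := qStar_nonneg F h0 hρ0
  have h2 : |q - qStar ρ F| ≤ M :=
    abs_le.2 ⟨by linarith [hq.1, hq.2], by linarith [hq.1, hq.2]⟩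
  exact le_trans h1 (mul_le_mul_of_nonneg_left h2 (by linarith))

lemma nv_diff_ge {b h ρ M lam : ℝ} (hb : 0 < b) (hh : 0 < h) (hρ0 : 0 < ρ)
    {G F : Measure ℝ} (hF : F ∈ Ambig ρ M G lam) {q : ℝ} (hq : q ∈ Icc 0 M) :
    -((b + h) * M) ≤ nvCost b h F q - nvCost b h F (qStar ρ F) := by
  obtain ⟨⟨hprob, h0, hint, hqM⟩, _⟩ := hF
  haveI := hprob
  have h1 := nvCost_sub_le b h hb.le hh.le F hint (qStar ρ F) q
  have hq0 := qStar_nonneg F h0 hρ0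
  have h2 : |qStar ρ F - q| ≤ M :=
    abs_le.2 ⟨by linarith [hq.1, hq.2], by linarith [hq.1, hq.2]⟩
  have := mul_le_mul_of_nonneg_left h2 (by linarith : (0:ℝ) ≤ b + h)
  linarith

lemma bddAbove_ambig {b h ρ M lam : ℝ} (hb : 0 < b) (hh : 0 < h) (hρ0 : 0 < ρ)
    (G : Measure ℝ) {q : ℝ} (hq : q ∈ Icc 0 M) :
    BddAbove ((fun F => nvCost b h F q - nvCost b h F (qStar ρ F)) '' Ambig ρ M G lam) := by
  refine ⟨(b + h) * M, ?_⟩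
  rintro y ⟨F, hF, rfl⟩
  exact nv_diff_le hb hh hρ0 hF hq

lemma regret_le {b h ρ M lam : ℝ} (hb : 0 < b) (hh : 0 < h) (hρ0 : 0 < ρ)
    {G : Measure ℝ} (hG : G ∈ GoodDist ρ M) {q : ℝ} (hq : q ∈ Icc 0 M) :
    Regret b h ρ M G lam q ≤ (b + h) * M := by
  refine csSup_le ⟨_, Set.mem_image_of_mem _ (ambig_self (lam := lam) hG)⟩ ?_
  rintro y ⟨F, hF, rfl⟩
  exact nv_diff_le hb hh hρ0 hF hq

lemma regret_ge_self {b h ρ M lam : ℝ} (hb : 0 < b) (hh : 0 < h) (hρ0 : 0 < ρ)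
    {G : Measure ℝ} (hG : G ∈ GoodDist ρ M) {q : ℝ} (hq : q ∈ Icc 0 M) :
    nvCost b h G q - nvCost b h G (qStar ρ G) ≤ Regret b h ρ M G lam q :=
  le_csSup (bddAbove_ambig hb hh hρ0 G hq) (Set.mem_image_of_mem _ (ambig_self (lam := lam) hG))

lemma regret_ge_neg {b h ρ M lam : ℝ} (hb : 0 < b) (hh : 0 < h) (hρ0 : 0 < ρ)
    {G : Measure ℝ} (hG : G ∈ GoodDist ρ M) {q : ℝ} (hq : q ∈ Icc 0 M) :
    -((b + h) * M) ≤ Regret b h ρ M G lam q :=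
  le_trans (nv_diff_ge (lam := lam) hb hh hρ0 (ambig_self (lam := lam) hG) hq)
    (regret_ge_self hb hh hρ0 hG hq)

lemma risk_ge {b h ρ M lam : ℝ} (hb : 0 < b) (hh : 0 < h) (hρ0 : 0 < ρ) (hM : 0 ≤ M)
    {G : Measure ℝ} (hG : G ∈ GoodDist ρ M) :
    -((b + h) * M) ≤ Risk b h ρ M G lam := by
  refine le_csInf ⟨_, Set.mem_image_of_mem _ (Set.mem_Icc.2 ⟨le_refl (0:ℝ), hM⟩)⟩ ?_
  rintro y ⟨q, hq, rfl⟩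
  exact regret_ge_neg hb hh hρ0 hG hq

lemma risk_le_zero {b h ρ M lam : ℝ} (hb : 0 < b) (hh : 0 < h) (hρ0 : 0 < ρ)
    {G : Measure ℝ} (hG : G ∈ GoodDist ρ M) (t : ℝ) (htIcc : t ∈ Icc 0 M)
    (ht : ∀ F ∈ Ambig ρ M G lam, qStar ρ F = t) :
    Risk b h ρ M G lam ≤ 0 := by
  have hreg : Regret b h ρ M G lam t = 0 := by
    have himg : (fun F => nvCost b h F t - nvCost b h F (qStar ρ F)) '' Ambig ρ M G lam
        = {0} := by
      refine Set.eq_singleton_iff_unique_mem.2 ⟨⟨G, ambig_self (lam := lam) hG, ?_⟩, ?_⟩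
      · show nvCost b h G t - nvCost b h G (qStar ρ G) = 0
        rw [ht G (ambig_self (lam := lam) hG)]; ring
      · rintro y ⟨F, hF, rfl⟩
        show nvCost b h F t - nvCost b h F (qStar ρ F) = 0
        rw [ht F hF]; ring
    rw [Regret, himg, csSup_singleton]
  refine csInf_le ⟨-((b + h) * M), ?_⟩ ⟨t, htIcc, hreg⟩
  rintro y ⟨q, hq, rfl⟩
  exact regret_ge_neg hb hh hρ0 hG hq

/-! ### quantiles of ambiguous distributions around three-atom centers -/

lemma qStar_agree_zero {ρ lam : ℝ} (hρ0 : 0 < ρ) (hlam0 : 0 < lam)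
    {w0 w1 w2 aa MM : ℝ} (hw0 : 0 ≤ w0) (hρw : ρ ≤ w0) (ha : 0 < aa) (haM : aa < MM)
    (F : Measure ℝ) [IsProbabilityMeasure F] (h0 : F (Iio 0) = 0)
    (hagree : ∀ x < lam, F (Iic x) = matom ![w0, w1, w2] ![0, aa, MM] (Iic x)) :
    qStar ρ F = 0 := by
  refine qStar_eq_of F ρ 0 ?_ ?_
  · rw [hagree 0 hlam0, matom3_Iic_lo w0 w1 w2 aa MM haM le_rfl ha,
      ENNReal.toReal_ofReal hw0]
    exact hρw
  · intro q hq
    have hz : F (Iic q) = 0 := measure_mono_null (Iic_subset_Iio.2 hq) h0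
    rw [hz]
    simpa using hρ0

lemma qStar_agree_mid {ρ lam : ℝ} (hρ0 : 0 < ρ) (hlam0 : 0 < lam)
    {w0 w1 w2 aa MM : ℝ} (hw0 : 0 ≤ w0) (hw1 : 0 ≤ w1) (hρw : w0 < ρ)
    (hρw1 : ρ ≤ w0 + w1) (ha : 0 < aa) (haM : aa < MM) (halam : aa < lam)
    (F : Measure ℝ) [IsProbabilityMeasure F] (h0 : F (Iio 0) = 0)
    (hagree : ∀ x < lam, F (Iic x) = matom ![w0, w1, w2] ![0, aa, MM] (Iic x)) :
    qStar ρ F = aa := by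
  refine qStar_eq_of F ρ aa ?_ ?_
  · rw [hagree aa halam, matom3_Iic_mid w0 w1 w2 aa MM ha.le le_rfl haM,
      ENNReal.toReal_add ENNReal.ofReal_ne_top ENNReal.ofReal_ne_top,
      ENNReal.toReal_ofReal hw0, ENNReal.toReal_ofReal hw1]
    exact hρw1
  · intro q hq
    rcases lt_or_ge q 0 with hq0 | hq0
    · have hz : F (Iic q) = 0 := measure_mono_null (Iic_subset_Iio.2 hq0) h0
      rw [hz]
      simpa using hρ0
    · rw [hagree q (by linarith), matom3_Iic_lo w0 w1 w2 aa MM haM hq0 hq,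
        ENNReal.toReal_ofReal hw0]
      exact hρw

/-! ### arithmetic lemmas -/

lemma gsum_ge_aux {b h ρ ε cc a M q : ℝ}
    (hb : 0 < b) (hh : 0 < h) (hρb : ρ * (b + h) = b)
    (hε : 0 < ε) (hεcc : ε ≤ cc) (hsum : ρ + 2 * cc = 1)
    (ha : 0 < a) (haM : a ≤ M) (hq0 : 0 ≤ q) (hqM : q ≤ M) :
    (0 ≤ ((ρ + ε) * (b * max (0 - q) 0 + h * max (q - 0) 0)
      + (cc - ε) * (b * max (a - q) 0 + h * max (q - a) 0)
      + cc * (b * max (M - q) 0 + h * max (q - M) 0))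
      - ((ρ + ε) * (b * max (0 - 0) 0 + h * max (0 - 0) 0)
      + (cc - ε) * (b * max (a - 0) 0 + h * max (0 - a) 0)
      + cc * (b * max (M - 0) 0 + h * max (0 - M) 0))) ∧
    (0 ≤ ((ρ - ε) * (b * max (0 - q) 0 + h * max (q - 0) 0)
      + (cc + ε) * (b * max (a - q) 0 + h * max (q - a) 0)
      + cc * (b * max (M - q) 0 + h * max (q - M) 0))
      - ((ρ - ε) * (b * max (0 - a) 0 + h * max (a - 0) 0)
      + (cc + ε) * (b * max (a - a) 0 + h * max (a - a) 0)
      + cc * (b * max (M - a) 0 + h * max (a - M) 0))) ∧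
    ((b + h) * ε * a ≤
      (((ρ + ε) * (b * max (0 - q) 0 + h * max (q - 0) 0)
      + (cc - ε) * (b * max (a - q) 0 + h * max (q - a) 0)
      + cc * (b * max (M - q) 0 + h * max (q - M) 0))
      - ((ρ + ε) * (b * max (0 - 0) 0 + h * max (0 - 0) 0)
      + (cc - ε) * (b * max (a - 0) 0 + h * max (0 - a) 0)
      + cc * (b * max (M - 0) 0 + h * max (0 - M) 0)))
      + (((ρ - ε) * (b * max (0 - q) 0 + h * max (q - 0) 0)
      + (cc + ε) * (b * max (a - q) 0 + h * max (q - a) 0)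
      + cc * (b * max (M - q) 0 + h * max (q - M) 0))
      - ((ρ - ε) * (b * max (0 - a) 0 + h * max (a - 0) 0)
      + (cc + ε) * (b * max (a - a) 0 + h * max (a - a) 0)
      + cc * (b * max (M - a) 0 + h * max (a - M) 0)))) := by
  have hM0 : 0 ≤ M := by linarith
  have e1 : max (0 - q) 0 = 0 := max_eq_right (by linarith)
  have e2 : max (q - 0) 0 = q - 0 := max_eq_left (by linarith)
  have e5 : max (M - q) 0 = M - q := max_eq_left (by linarith)
  have e6 : max (q - M) 0 = 0 := max_eq_right (by linarith)
  have e7 : max (0 - (0:ℝ)) 0 = 0 := by norm_num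
  have e8 : max (a - 0) 0 = a - 0 := max_eq_left (by linarith)
  have e9 : max (0 - a) 0 = 0 := max_eq_right (by linarith)
  have e10 : max (M - 0) 0 = M - 0 := max_eq_left (by linarith)
  have e11 : max (0 - M) 0 = 0 := max_eq_right (by linarith)
  have e12 : max (a - a) 0 = 0 := by rw [sub_self]; exact max_self 0
  have e13 : max (M - a) 0 = M - a := max_eq_left (by linarith)
  have e14 : max (a - M) 0 = 0 := max_eq_right (by linarith)
  have hbh : (0:ℝ) ≤ b + h := by linarith
  rcases le_total q a with hc | hc
  · have e3 : max (a - q) 0 = a - q := max_eq_left (by linarith)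
    have e4 : max (q - a) 0 = 0 := max_eq_right (by linarith)
    rw [e1, e2, e3, e4, e5, e6, e7, e8, e9, e10, e11, e12, e13, e14]
    have key1 : ((ρ + ε) * (b * 0 + h * (q - 0))
        + (cc - ε) * (b * (a - q) + h * 0) + cc * (b * (M - q) + h * 0))
        - ((ρ + ε) * (b * 0 + h * 0) + (cc - ε) * (b * (a - 0) + h * 0)
        + cc * (b * (M - 0) + h * 0)) = (b + h) * ε * q := by
      linear_combination q * hρb - q * b * hsum
    have key2 : ((ρ - ε) * (b * 0 + h * (q - 0))
        + (cc + ε) * (b * (a - q) + h * 0) + cc * (b * (M - q) + h * 0))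
        - ((ρ - ε) * (b * 0 + h * (a - 0)) + (cc + ε) * (b * 0 + h * 0)
        + cc * (b * (M - a) + h * 0)) = (b + h) * ε * (a - q) := by
      linear_combination (q - a) * hρb + (a - q) * b * hsum
    rw [key1, key2]
    exact ⟨by positivity,
      by nlinarith [mul_nonneg (mul_nonneg hbh hε.le) (by linarith : (0:ℝ) ≤ a - q)],
      by apply le_of_eq; ring⟩
  · have e3 : max (a - q) 0 = 0 := max_eq_right (by linarith)
    have e4 : max (q - a) 0 = q - a := max_eq_left (by linarith)
    rw [e1, e2, e3, e4, e5, e6, e7, e8, e9, e10, e11, e12, e13, e14]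
    have key1 : ((ρ + ε) * (b * 0 + h * (q - 0))
        + (cc - ε) * (b * 0 + h * (q - a)) + cc * (b * (M - q) + h * 0))
        - ((ρ + ε) * (b * 0 + h * 0) + (cc - ε) * (b * (a - 0) + h * 0)
        + cc * (b * (M - 0) + h * 0)) = (b + h) * (ε * a + cc * (q - a)) := by
      linear_combination q * hρb - q * b * hsum
    have key2 : ((ρ - ε) * (b * 0 + h * (q - 0))
        + (cc + ε) * (b * 0 + h * (q - a)) + cc * (b * (M - q) + h * 0))
        - ((ρ - ε) * (b * 0 + h * (a - 0)) + (cc + ε) * (b * 0 + h * 0)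
        + cc * (b * (M - a) + h * 0)) = (b + h) * (cc * (q - a)) := by
      linear_combination (q - a) * hρb - (q - a) * b * hsum
    rw [key1, key2]
    have hqa : (0:ℝ) ≤ q - a := by linarith
    have hcc : (0:ℝ) ≤ cc := by linarith
    refine ⟨mul_nonneg hbh (by positivity), mul_nonneg hbh (by positivity), ?_⟩
    nlinarith [mul_nonneg (mul_nonneg hbh hcc) hqa]

lemma sqrt_prod' {ι : Type*} (s : Finset ι) (f : ι → ℝ) (hf : ∀ i ∈ s, 0 ≤ f i) :
    Real.sqrt (∏ i ∈ s, f i) = ∏ i ∈ s, Real.sqrt (f i) := by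
  classical
  induction s using Finset.cons_induction with
  | empty => simp
  | cons i s hi ih =>
    rw [Finset.prod_cons, Finset.prod_cons,
      Real.sqrt_mul (hf i (Finset.mem_cons_self i s)),
      ih fun j hj => hf j (Finset.mem_cons_of_mem hj)]

lemma sum_min_ge {ι : Type*} [Fintype ι] (P1 P2 : ι → ℝ)
    (h1 : ∀ x, 0 ≤ P1 x) (h2 : ∀ x, 0 ≤ P2 x)
    (hs1 : ∑ x, P1 x = 1) (hs2 : ∑ x, P2 x = 1) :
    (∑ x, Real.sqrt (P1 x) * Real.sqrt (P2 x)) ^ 2 / 2 ≤ ∑ x, min (P1 x) (P2 x) := by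
  have key : (∑ x, Real.sqrt (P1 x) * Real.sqrt (P2 x)) ^ 2
      ≤ (∑ x, min (P1 x) (P2 x)) * (∑ x, max (P1 x) (P2 x)) := by
    have cs := Finset.sum_mul_sq_le_sq_mul_sq Finset.univ
      (fun x => Real.sqrt (min (P1 x) (P2 x))) (fun x => Real.sqrt (max (P1 x) (P2 x)))
    have e : ∀ x : ι, Real.sqrt (min (P1 x) (P2 x)) * Real.sqrt (max (P1 x) (P2 x))
        = Real.sqrt (P1 x) * Real.sqrt (P2 x) := by
      intro x
      rw [← Real.sqrt_mul (le_min (h1 x) (h2 x)), min_mul_max, Real.sqrt_mul (h1 x)]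
    rw [Finset.sum_congr rfl fun x _ => e x] at cs
    have e2 : ∀ x : ι, Real.sqrt (min (P1 x) (P2 x)) ^ 2 = min (P1 x) (P2 x) :=
      fun x => Real.sq_sqrt (le_min (h1 x) (h2 x))
    have e3 : ∀ x : ι, Real.sqrt (max (P1 x) (P2 x)) ^ 2 = max (P1 x) (P2 x) :=
      fun x => Real.sq_sqrt (le_trans (h1 x) (le_max_left _ _))
    rw [Finset.sum_congr rfl fun x _ => e2 x, Finset.sum_congr rfl fun x _ => e3 x] at cs
    exact cs
  have hmax : ∑ x, max (P1 x) (P2 x) ≤ 2 := by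
    calc ∑ x, max (P1 x) (P2 x) ≤ ∑ x, (P1 x + P2 x) :=
          Finset.sum_le_sum fun x _ => max_le_iff.2 ⟨by linarith [h2 x], by linarith [h1 x]⟩
      _ = 2 := by rw [Finset.sum_add_distrib, hs1, hs2]; norm_num
  have hminnn : 0 ≤ ∑ x, min (P1 x) (P2 x) :=
    Finset.sum_nonneg fun x _ => le_min (h1 x) (h2 x)
  nlinarith [key, hmax, hminnn]

lemma sqrt_affinity (r ε : ℝ) (hr : 0 < r) (hε : 0 ≤ ε) (hεr : ε ≤ r) :
    r - ε ^ 2 / r ≤ Real.sqrt (r + ε) * Real.sqrt (r - ε) := by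
  rw [← Real.sqrt_mul (by linarith)]
  have hnn : 0 ≤ r - ε ^ 2 / r := by
    rw [sub_nonneg, div_le_iff₀ hr]
    nlinarith
  rw [show (r + ε) * (r - ε) = r ^ 2 - ε ^ 2 by ring]
  have hsq : ε ^ 2 ≤ r ^ 2 := pow_le_pow_left₀ hε hεr 2
  rw [Real.le_sqrt hnn (by nlinarith [hsq])]
  have expand : (r - ε ^ 2 / r) ^ 2 = r ^ 2 - 2 * ε ^ 2 + (ε ^ 2) ^ 2 / r ^ 2 := by
    field_simp
    ring
  have hb : (ε ^ 2) ^ 2 / r ^ 2 ≤ ε ^ 2 := by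
    rw [div_le_iff₀ (by positivity)]
    nlinarith [hsq, sq_nonneg ε, mul_le_mul_of_nonneg_left hsq (sq_nonneg ε)]
  nlinarith [expand, hb]

lemma exp_neg_two_le (x : ℝ) (hx0 : 0 ≤ x) (hx : x ≤ 1 / 2) :
    Real.exp (-(2 * x)) ≤ 1 - x := by
  have h1 : 1 + 2 * x ≤ Real.exp (2 * x) := by linarith [Real.add_one_le_exp (2 * x)]
  have h2 : Real.exp (-(2 * x)) = 1 / Real.exp (2 * x) := by
    rw [Real.exp_neg]; exact inv_eq_one_div _
  rw [h2]
  have h3 : 1 / Real.exp (2 * x) ≤ 1 / (1 + 2 * x) :=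
    one_div_le_one_div_of_le (by linarith) h1
  have h4 : 1 / (1 + 2 * x) ≤ 1 - x := by
    rw [div_le_iff₀ (by linarith)]
    nlinarith
  linarith

lemma sum_prod_pow {n N : ℕ} (u : Fin n → ℝ) :
    ∑ x : Fin N → Fin n, ∏ i, u (x i) = (∑ k, u k) ^ N := by
  have hps := Finset.prod_univ_sum (fun _ : Fin N => (Finset.univ : Finset (Fin n)))
    (fun _ k => u k)
  rw [Fintype.piFinset_univ] at hps
  rw [← hps, Finset.prod_const, Finset.card_univ, Fintype.card_fin]

lemma nl_bound1 {ρ m : ℝ} (hρ0 : 0 < ρ) (hρ1 : ρ < 1) (hm0 : 0 < m) (hmρ : m ≤ ρ)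
    (hm2 : m ≤ 1 / 2) : 2 * ((1 - ρ) * m ^ 2) ≤ 1 * ρ := by
  nlinarith [mul_le_mul_of_nonneg_left hm2 hm0.le]

lemma nl_bound2 {ρ m : ℝ} (hρ1 : ρ < 1) (hm0 : 0 < m) (hm2 : m ≤ 1 / 2) :
    2 * ((1 - ρ) * m ^ 2) ≤ 1 * ((1 - ρ) / 2) := by
  nlinarith [mul_le_mul_of_nonneg_left hm2 hm0.le]

end Stmt17Aux

end AuxStmt17

set_option maxHeartbeats 1000000 in
open Stmt17Aux in
/-- lower bound in the strictly identifiable regime. -/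
theorem stmt17 (b h M lam ρ : ℝ) (hb : 0 < b) (hh : 0 < h)
    (hlam0 : 0 < lam) (hlam1 : lam < 1) (hM : 1 ≤ M)
    (hρ : ρ = b / (b + h)) (N : ℕ) (hN : 1 ≤ N)
    (π : (Fin N → ℝ) → ℝ) (hmeas : Measurable π) (hrange : ∀ d, π d ∈ Icc (0 : ℝ) M) :
    lam * (b + h) * Real.sqrt (1 - ρ) * min ρ (1 - ρ) * Real.exp (-(1 / 2 : ℝ)) /
        (64 * Real.sqrt (N : ℝ)) ≤
      sSup {r : ℝ | ∃ G ∈ GoodDist ρ M, ρ < (G (Iio lam)).toReal ∧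
        r = ∫ d, (Regret b h ρ M G lam (π fun i => min (d i) lam)
                    - Risk b h ρ M G lam) ∂(iidPi N G)} := by
  classical
  have hbh : 0 < b + h := by linarith
  have hρ0 : 0 < ρ := by rw [hρ]; positivity
  have hρ1 : ρ < 1 := by rw [hρ, div_lt_one hbh]; linarith
  have hρb : ρ * (b + h) = b := by rw [hρ]; field_simp
  set m : ℝ := min ρ (1 - ρ) with hm_def
  have hmρ : m ≤ ρ := min_le_left _ _
  have hm1ρ : m ≤ 1 - ρ := min_le_right _ _
  have hm0 : 0 < m := lt_min hρ0 (by linarith)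
  have hm2 : m ≤ 1 / 2 := by
    rcases le_total ρ (1 - ρ) with hc | hc
    · rw [hm_def, min_eq_left hc]; linarith
    · rw [hm_def, min_eq_right hc]; linarith
  set Nr : ℝ := (N : ℝ) with hNr_def
  have hNr1 : (1 : ℝ) ≤ Nr := by rw [hNr_def]; exact_mod_cast hN
  have hNr0 : 0 < Nr := by linarith
  set sN : ℝ := Real.sqrt Nr with hsN_def
  have hsN1 : 1 ≤ sN := by
    have h1 := Real.sqrt_le_sqrt hNr1
    rwa [Real.sqrt_one] at h1
  have hsN0 : 0 < sN := by linarith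
  have hsN2 : sN ^ 2 = Nr := Real.sq_sqrt hNr0.le
  set sQ : ℝ := Real.sqrt (1 - ρ) with hsQ_def
  have hsQ0 : 0 < sQ := Real.sqrt_pos.2 (by linarith)
  have hsQ1 : sQ ≤ 1 := by rw [hsQ_def]; exact Real.sqrt_le_one.mpr (by linarith)
  have hsQ2 : sQ ^ 2 = 1 - ρ := Real.sq_sqrt (by linarith)
  set ε : ℝ := sQ * m / (8 * sN) with hε_def
  have hε0 : 0 < ε := div_pos (mul_pos hsQ0 hm0) (by linarith)
  have hεm : ε ≤ m / 8 := by
    rw [hε_def]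
    apply div_le_div₀ (by linarith : (0:ℝ) ≤ m) ?_ (by norm_num) (by linarith)
    nlinarith
  have hερ : ε ≤ ρ := by linarith
  set cc : ℝ := (1 - ρ) / 2 with hcc_def
  have hcc0 : 0 < cc := by rw [hcc_def]; linarith
  have hεcc : ε ≤ cc := by rw [hcc_def]; linarith
  have hsumρ : ρ + 2 * cc = 1 := by rw [hcc_def]; ring
  set a : ℝ := lam / 2 with ha_def
  have ha0 : 0 < a := by rw [ha_def]; linarith
  have halam : a < lam := by rw [ha_def]; linarith
  have haM : a < M := by rw [ha_def]; linarith
  have hlamM : lam < M := by linarith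
  have hM0 : 0 < M := by linarith
  -- the two hard distributions
  set G1 : Measure ℝ := matom ![ρ + ε, cc - ε, cc] ![0, a, M] with hG1def
  set G2 : Measure ℝ := matom ![ρ - ε, cc + ε, cc] ![0, a, M] with hG2def
  have hw1_nonneg : ∀ k, 0 ≤ (![ρ + ε, cc - ε, cc] : Fin 3 → ℝ) k := by
    intro k; fin_cases k <;> simp <;> linarith
  have hw2_nonneg : ∀ k, 0 ≤ (![ρ - ε, cc + ε, cc] : Fin 3 → ℝ) k := by
    intro k; fin_cases k <;> simp <;> linarith
  have hG1prob : IsProbabilityMeasure G1 := by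
    rw [hG1def]
    exact matom3_prob _ _ _ _ _ (by linarith) (by linarith) (by linarith) (by linarith)
  have hG2prob : IsProbabilityMeasure G2 := by
    rw [hG2def]
    exact matom3_prob _ _ _ _ _ (by linarith) (by linarith) (by linarith) (by linarith)
  have hG1zero : G1 (Iio 0) = 0 := by
    rw [hG1def]; exact matom3_Iio_zero _ _ _ _ _ ha0 haM
  have hG2zero : G2 (Iio 0) = 0 := by
    rw [hG2def]; exact matom3_Iio_zero _ _ _ _ _ ha0 haM
  have hq1 : qStar ρ G1 = 0 := by
    haveI := hG1prob
    exact qStar_agree_zero (w0 := ρ + ε) (w1 := cc - ε) (w2 := cc) (aa := a) (MM := M)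
      hρ0 hlam0 (by linarith) (by linarith) ha0 haM G1 hG1zero (fun x _ => by rw [hG1def])
  have hq2 : qStar ρ G2 = a := by
    haveI := hG2prob
    exact qStar_agree_mid (w0 := ρ - ε) (w1 := cc + ε) (w2 := cc) (aa := a) (MM := M)
      hρ0 hlam0 (by linarith) (by linarith) (by linarith) (by linarith)
      ha0 haM halam G2 hG2zero (fun x _ => by rw [hG2def])
  have hG1good : G1 ∈ GoodDist ρ M := by
    refine ⟨hG1prob, hG1zero, ?_, by rw [hq1]; linarith⟩
    rw [hG1def]; exact integrable_matom _ _ id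
  have hG2good : G2 ∈ GoodDist ρ M := by
    refine ⟨hG2prob, hG2zero, ?_, by rw [hq2]; linarith⟩
    rw [hG2def]; exact integrable_matom _ _ id
  -- the quantile is identifiable across each ambiguity class
  have hqA1 : ∀ F ∈ Ambig ρ M G1 lam, qStar ρ F = 0 := by
    rintro F ⟨⟨hFp, hF0, _, _⟩, hFa⟩
    haveI := hFp
    exact qStar_agree_zero (w0 := ρ + ε) (w1 := cc - ε) (w2 := cc) (aa := a) (MM := M)
      hρ0 hlam0 (by linarith) (by linarith) ha0 haM F hF0
      (fun x hx => by rw [hFa x hx, hG1def])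
  have hqA2 : ∀ F ∈ Ambig ρ M G2 lam, qStar ρ F = a := by
    rintro F ⟨⟨hFp, hF0, _, _⟩, hFa⟩
    haveI := hFp
    exact qStar_agree_mid (w0 := ρ - ε) (w1 := cc + ε) (w2 := cc) (aa := a) (MM := M)
      hρ0 hlam0 (by linarith) (by linarith) (by linarith) (by linarith)
      ha0 haM halam F hF0 (fun x hx => by rw [hFa x hx, hG2def])
  have hRisk1 : Risk b h ρ M G1 lam ≤ 0 :=
    risk_le_zero hb hh hρ0 hG1good 0 ⟨le_rfl, hM0.le⟩ hqA1
  have hRisk2 : Risk b h ρ M G2 lam ≤ 0 :=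
    risk_le_zero hb hh hρ0 hG2good a ⟨ha0.le, haM.le⟩ hqA2
  have hreg1 : ∀ q : ℝ, q ∈ Icc 0 M →
      nvCost b h G1 q - nvCost b h G1 0 ≤ Regret b h ρ M G1 lam q := by
    intro q hq
    have h1 := regret_ge_self (lam := lam) hb hh hρ0 hG1good hq
    rwa [hq1] at h1
  have hreg2 : ∀ q : ℝ, q ∈ Icc 0 M →
      nvCost b h G2 q - nvCost b h G2 a ≤ Regret b h ρ M G2 lam q := by
    intro q hq
    have h1 := regret_ge_self (lam := lam) hb hh hρ0 hG2good hq
    rwa [hq2] at h1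
  -- explicit cost formulas and the two-point bound
  have hnv1 : ∀ q : ℝ, nvCost b h G1 q =
      (ρ + ε) * (b * max (0 - q) 0 + h * max (q - 0) 0)
      + (cc - ε) * (b * max (a - q) 0 + h * max (q - a) 0)
      + cc * (b * max (M - q) 0 + h * max (q - M) 0) := fun q => by
    rw [hG1def]
    exact nvCost_matom3 b h _ _ _ a M q (by linarith) (by linarith) (by linarith)
  have hnv2 : ∀ q : ℝ, nvCost b h G2 q =
      (ρ - ε) * (b * max (0 - q) 0 + h * max (q - 0) 0)
      + (cc + ε) * (b * max (a - q) 0 + h * max (q - a) 0)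
      + cc * (b * max (M - q) 0 + h * max (q - M) 0) := fun q => by
    rw [hG2def]
    exact nvCost_matom3 b h _ _ _ a M q (by linarith) (by linarith) (by linarith)
  have hg : ∀ q : ℝ, 0 ≤ q → q ≤ M →
      (0 ≤ nvCost b h G1 q - nvCost b h G1 0) ∧
      (0 ≤ nvCost b h G2 q - nvCost b h G2 a) ∧
      ((b + h) * ε * a ≤ (nvCost b h G1 q - nvCost b h G1 0)
        + (nvCost b h G2 q - nvCost b h G2 a)) := by
    intro q hq0 hqM
    rw [hnv1 q, hnv1 0, hnv2 q, hnv2 a]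
    exact gsum_ge_aux hb hh hρb hε0 hεcc hsumρ ha0 haM.le hq0 hqM
  -- integral representation over the finite support
  have key_int : ∀ (w : Fin 3 → ℝ), (∀ k, 0 ≤ w k) → ∀ f : (Fin N → ℝ) → ℝ,
      (∫ d, f d ∂(iidPi N (matom w ![0, a, M])))
        = ∑ x : Fin N → Fin 3,
            (∏ i, w (x i)) * f (fun i => (![0, a, M] : Fin 3 → ℝ) (x i)) := by
    intro w hw f
    haveI : IsFiniteMeasure (matom w ![0, a, M]) := by
      constructor
      rw [matom_apply]
      refine ENNReal.sum_lt_top.2 fun k _ => ?_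
      exact ENNReal.mul_lt_top ENNReal.ofReal_lt_top
        (by simp : ((Set.univ : Set ℝ).indicator 1 ((![0, a, M] : Fin 3 → ℝ) k) : ENNReal) < ⊤)
    have hunf : iidPi N (matom w ![0, a, M]) = Measure.pi (fun _ => matom w ![0, a, M]) := by
      haveI hsf : SigmaFinite (matom w ![0, a, M]) := inferInstance
      rw [iidPi]; exact dif_pos hsf
    rw [hunf, pi_matom, integral_finset_sum_measure (fun x _ =>
      integrable_smul_dirac _ _ _ (ENNReal.prod_lt_top (fun _ _ => ENNReal.ofReal_lt_top)).ne)]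
    refine Finset.sum_congr rfl fun x _ => ?_
    rw [integral_smul_measure, integral_dirac, smul_eq_mul, ENNReal.toReal_prod]
    congr 1
    exact Finset.prod_congr rfl fun i _ => ENNReal.toReal_ofReal (hw (x i))
  set r1 : ℝ := ∫ d, (Regret b h ρ M G1 lam (π fun i => min (d i) lam)
      - Risk b h ρ M G1 lam) ∂(iidPi N G1) with hr1def
  set r2 : ℝ := ∫ d, (Regret b h ρ M G2 lam (π fun i => min (d i) lam)
      - Risk b h ρ M G2 lam) ∂(iidPi N G2) with hr2def
  have hr1eq : r1 = ∑ x : Fin N → Fin 3,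
      (∏ i, (![ρ + ε, cc - ε, cc] : Fin 3 → ℝ) (x i)) *
        (Regret b h ρ M G1 lam (π fun i => min ((![0, a, M] : Fin 3 → ℝ) (x i)) lam)
          - Risk b h ρ M G1 lam) := by
    rw [hr1def]
    exact key_int _ hw1_nonneg _
  have hr2eq : r2 = ∑ x : Fin N → Fin 3,
      (∏ i, (![ρ - ε, cc + ε, cc] : Fin 3 → ℝ) (x i)) *
        (Regret b h ρ M G2 lam (π fun i => min ((![0, a, M] : Fin 3 → ℝ) (x i)) lam)
          - Risk b h ρ M G2 lam) := by
    rw [hr2def]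
    exact key_int _ hw2_nonneg _
  have hP1nn : ∀ x : Fin N → Fin 3, 0 ≤ ∏ i, (![ρ + ε, cc - ε, cc] : Fin 3 → ℝ) (x i) :=
    fun x => Finset.prod_nonneg fun i _ => hw1_nonneg (x i)
  have hP2nn : ∀ x : Fin N → Fin 3, 0 ≤ ∏ i, (![ρ - ε, cc + ε, cc] : Fin 3 → ℝ) (x i) :=
    fun x => Finset.prod_nonneg fun i _ => hw2_nonneg (x i)
  -- per-sample-path inequality
  have hterm : ∀ x : Fin N → Fin 3,
      ((b + h) * ε * a) * min (∏ i, (![ρ + ε, cc - ε, cc] : Fin 3 → ℝ) (x i))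
          (∏ i, (![ρ - ε, cc + ε, cc] : Fin 3 → ℝ) (x i))
        ≤ (∏ i, (![ρ + ε, cc - ε, cc] : Fin 3 → ℝ) (x i)) *
            (Regret b h ρ M G1 lam (π fun i => min ((![0, a, M] : Fin 3 → ℝ) (x i)) lam)
              - Risk b h ρ M G1 lam)
          + (∏ i, (![ρ - ε, cc + ε, cc] : Fin 3 → ℝ) (x i)) *
            (Regret b h ρ M G2 lam (π fun i => min ((![0, a, M] : Fin 3 → ℝ) (x i)) lam)
              - Risk b h ρ M G2 lam) := by
    intro x
    set q : ℝ := π (fun i => min ((![0, a, M] : Fin 3 → ℝ) (x i)) lam) with hqdef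
    have hqI : q ∈ Icc (0:ℝ) M := hrange _
    obtain ⟨hg1, hg2, hg12⟩ := hg q hqI.1 hqI.2
    have hb1 : nvCost b h G1 q - nvCost b h G1 0
        ≤ Regret b h ρ M G1 lam q - Risk b h ρ M G1 lam := by
      linarith [hreg1 q hqI]
    have hb2 : nvCost b h G2 q - nvCost b h G2 a
        ≤ Regret b h ρ M G2 lam q - Risk b h ρ M G2 lam := by
      linarith [hreg2 q hqI]
    have hA1 := hP1nn x
    have hA2 := hP2nn x
    have hmAnn : 0 ≤ min (∏ i, (![ρ + ε, cc - ε, cc] : Fin 3 → ℝ) (x i))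
        (∏ i, (![ρ - ε, cc + ε, cc] : Fin 3 → ℝ) (x i)) := le_min hA1 hA2
    have t1 : min (∏ i, (![ρ + ε, cc - ε, cc] : Fin 3 → ℝ) (x i))
          (∏ i, (![ρ - ε, cc + ε, cc] : Fin 3 → ℝ) (x i)) * (nvCost b h G1 q - nvCost b h G1 0)
        ≤ (∏ i, (![ρ + ε, cc - ε, cc] : Fin 3 → ℝ) (x i)) *
          (Regret b h ρ M G1 lam q - Risk b h ρ M G1 lam) :=
      le_trans (mul_le_mul_of_nonneg_right (min_le_left _ _) hg1)
        (mul_le_mul_of_nonneg_left hb1 hA1)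
    have t2 : min (∏ i, (![ρ + ε, cc - ε, cc] : Fin 3 → ℝ) (x i))
          (∏ i, (![ρ - ε, cc + ε, cc] : Fin 3 → ℝ) (x i)) * (nvCost b h G2 q - nvCost b h G2 a)
        ≤ (∏ i, (![ρ - ε, cc + ε, cc] : Fin 3 → ℝ) (x i)) *
          (Regret b h ρ M G2 lam q - Risk b h ρ M G2 lam) :=
      le_trans (mul_le_mul_of_nonneg_right (min_le_right _ _) hg2)
        (mul_le_mul_of_nonneg_left hb2 hA2)
    have t3 := mul_le_mul_of_nonneg_left hg12 hmAnn
    calc ((b + h) * ε * a) * min _ _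
        = min (∏ i, (![ρ + ε, cc - ε, cc] : Fin 3 → ℝ) (x i))
            (∏ i, (![ρ - ε, cc + ε, cc] : Fin 3 → ℝ) (x i)) * ((b + h) * ε * a) :=
          mul_comm _ _
      _ ≤ min (∏ i, (![ρ + ε, cc - ε, cc] : Fin 3 → ℝ) (x i))
            (∏ i, (![ρ - ε, cc + ε, cc] : Fin 3 → ℝ) (x i)) *
            ((nvCost b h G1 q - nvCost b h G1 0) + (nvCost b h G2 q - nvCost b h G2 a)) := t3
      _ = min (∏ i, (![ρ + ε, cc - ε, cc] : Fin 3 → ℝ) (x i))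
            (∏ i, (![ρ - ε, cc + ε, cc] : Fin 3 → ℝ) (x i)) * (nvCost b h G1 q - nvCost b h G1 0)
          + min (∏ i, (![ρ + ε, cc - ε, cc] : Fin 3 → ℝ) (x i))
            (∏ i, (![ρ - ε, cc + ε, cc] : Fin 3 → ℝ) (x i)) *
              (nvCost b h G2 q - nvCost b h G2 a) := by ring
      _ ≤ _ := add_le_add t1 t2
  have hcentral : ((b + h) * ε * a) *
      (∑ x : Fin N → Fin 3, min (∏ i, (![ρ + ε, cc - ε, cc] : Fin 3 → ℝ) (x i))
        (∏ i, (![ρ - ε, cc + ε, cc] : Fin 3 → ℝ) (x i))) ≤ r1 + r2 := by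
    rw [hr1eq, hr2eq, ← Finset.sum_add_distrib, Finset.mul_sum]
    exact Finset.sum_le_sum fun x _ => hterm x
  -- probability normalization
  have hsum1 : ∑ x : Fin N → Fin 3, (∏ i, (![ρ + ε, cc - ε, cc] : Fin 3 → ℝ) (x i)) = 1 := by
    rw [sum_prod_pow]
    have h1 : ∑ k, (![ρ + ε, cc - ε, cc] : Fin 3 → ℝ) k = 1 := by
      rw [Fin.sum_univ_three]
      simp only [Matrix.cons_val_zero, Matrix.cons_val_one, Matrix.head_cons,
        Matrix.cons_val_two, Matrix.tail_cons]
      linarith only [hsumρ]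
    rw [h1, one_pow]
  have hsum2 : ∑ x : Fin N → Fin 3, (∏ i, (![ρ - ε, cc + ε, cc] : Fin 3 → ℝ) (x i)) = 1 := by
    rw [sum_prod_pow]
    have h1 : ∑ k, (![ρ - ε, cc + ε, cc] : Fin 3 → ℝ) k = 1 := by
      rw [Fin.sum_univ_three]
      simp only [Matrix.cons_val_zero, Matrix.cons_val_one, Matrix.head_cons,
        Matrix.cons_val_two, Matrix.tail_cons]
      linarith only [hsumρ]
    rw [h1, one_pow]
  -- Hellinger affinity bound
  have hsqrtP : ∀ x : Fin N → Fin 3,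
      Real.sqrt (∏ i, (![ρ + ε, cc - ε, cc] : Fin 3 → ℝ) (x i)) *
        Real.sqrt (∏ i, (![ρ - ε, cc + ε, cc] : Fin 3 → ℝ) (x i))
      = ∏ i, (Real.sqrt ((![ρ + ε, cc - ε, cc] : Fin 3 → ℝ) (x i)) *
          Real.sqrt ((![ρ - ε, cc + ε, cc] : Fin 3 → ℝ) (x i))) := by
    intro x
    rw [sqrt_prod' _ _ (fun i _ => hw1_nonneg (x i)),
      sqrt_prod' _ _ (fun i _ => hw2_nonneg (x i)), ← Finset.prod_mul_distrib]
  have hαsum : ∑ x : Fin N → Fin 3,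
      Real.sqrt (∏ i, (![ρ + ε, cc - ε, cc] : Fin 3 → ℝ) (x i)) *
        Real.sqrt (∏ i, (![ρ - ε, cc + ε, cc] : Fin 3 → ℝ) (x i))
      = (∑ k, Real.sqrt ((![ρ + ε, cc - ε, cc] : Fin 3 → ℝ) k) *
          Real.sqrt ((![ρ - ε, cc + ε, cc] : Fin 3 → ℝ) k)) ^ N := by
    rw [Finset.sum_congr rfl fun x _ => hsqrtP x]
    exact sum_prod_pow (fun k => Real.sqrt ((![ρ + ε, cc - ε, cc] : Fin 3 → ℝ) k) *
      Real.sqrt ((![ρ - ε, cc + ε, cc] : Fin 3 → ℝ) k))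
  have hαval : ∑ k, Real.sqrt ((![ρ + ε, cc - ε, cc] : Fin 3 → ℝ) k) *
      Real.sqrt ((![ρ - ε, cc + ε, cc] : Fin 3 → ℝ) k)
      = Real.sqrt (ρ + ε) * Real.sqrt (ρ - ε) + Real.sqrt (cc - ε) * Real.sqrt (cc + ε)
        + Real.sqrt cc * Real.sqrt cc := by
    rw [Fin.sum_univ_three]
    simp only [Matrix.cons_val_zero, Matrix.cons_val_one, Matrix.head_cons,
      Matrix.cons_val_two, Matrix.tail_cons]
  have hε2 : ε ^ 2 = (1 - ρ) * m ^ 2 / (64 * Nr) := by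
    have h1 : ε ^ 2 = (sQ ^ 2 * m ^ 2) / (64 * sN ^ 2) := by
      rw [hε_def]; field_simp; ring
    rw [h1, hsQ2, hsN2]
  have hdiv1 : ε ^ 2 / ρ ≤ 1 / (128 * Nr) := by
    rw [div_le_div_iff₀ hρ0 (by positivity)]
    have heq : ε ^ 2 * (128 * Nr) = 2 * ((1 - ρ) * m ^ 2) := by
      rw [hε2]; field_simp; ring
    rw [heq]
    exact nl_bound1 hρ0 hρ1 hm0 hmρ hm2
  have hdiv2 : ε ^ 2 / cc ≤ 1 / (128 * Nr) := by
    rw [div_le_div_iff₀ hcc0 (by positivity)]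
    have heq : ε ^ 2 * (128 * Nr) = 2 * ((1 - ρ) * m ^ 2) := by
      rw [hε2]; field_simp; ring
    rw [heq, hcc_def]
    exact nl_bound2 hρ1 hm0 hm2
  have hdivsum : ε ^ 2 / ρ + ε ^ 2 / cc ≤ 1 / (64 * Nr) := by
    have h128 : (1:ℝ) / (128 * Nr) + 1 / (128 * Nr) = 1 / (64 * Nr) := by
      field_simp
      ring
    linarith only [hdiv1, hdiv2, h128]
  have hα_ge : 1 - 1 / (64 * Nr) ≤ Real.sqrt (ρ + ε) * Real.sqrt (ρ - ε)
      + Real.sqrt (cc - ε) * Real.sqrt (cc + ε) + Real.sqrt cc * Real.sqrt cc := by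
    have a1 := sqrt_affinity ρ ε hρ0 hε0.le hερ
    have a2 := sqrt_affinity cc ε hcc0 hε0.le hεcc
    have a3 : Real.sqrt cc * Real.sqrt cc = cc := Real.mul_self_sqrt hcc0.le
    have a2' : cc - ε ^ 2 / cc ≤ Real.sqrt (cc - ε) * Real.sqrt (cc + ε) := by
      rw [mul_comm]; exact a2
    rw [a3]
    linarith only [a1, a2', hdivsum, hsumρ]
  have hx0 : (0:ℝ) ≤ 1 / (64 * Nr) := by positivity
  have hxhalf : 1 / (64 * Nr) ≤ 1 / 2 := by
    rw [div_le_div_iff₀ (by positivity) (by norm_num)]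
    linarith only [hNr1]
  have hexpα : Real.exp (-(2 * (1 / (64 * Nr))))
      ≤ ∑ k, Real.sqrt ((![ρ + ε, cc - ε, cc] : Fin 3 → ℝ) k) *
          Real.sqrt ((![ρ - ε, cc + ε, cc] : Fin 3 → ℝ) k) := by
    rw [hαval]
    linarith only [exp_neg_two_le (1 / (64 * Nr)) hx0 hxhalf, hα_ge]
  have hα2N : Real.exp (-(1 / 2 : ℝ)) ≤
      ((∑ k, Real.sqrt ((![ρ + ε, cc - ε, cc] : Fin 3 → ℝ) k) *
          Real.sqrt ((![ρ - ε, cc + ε, cc] : Fin 3 → ℝ) k)) ^ N) ^ 2 := by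
    have hp1 : Real.exp (-(2 * (1 / (64 * Nr)))) ^ N
        ≤ (∑ k, Real.sqrt ((![ρ + ε, cc - ε, cc] : Fin 3 → ℝ) k) *
            Real.sqrt ((![ρ - ε, cc + ε, cc] : Fin 3 → ℝ) k)) ^ N :=
      pow_le_pow_left₀ (Real.exp_nonneg _) hexpα N
    have hp2 : (Real.exp (-(2 * (1 / (64 * Nr)))) ^ N) ^ 2
        ≤ ((∑ k, Real.sqrt ((![ρ + ε, cc - ε, cc] : Fin 3 → ℝ) k) *
            Real.sqrt ((![ρ - ε, cc + ε, cc] : Fin 3 → ℝ) k)) ^ N) ^ 2 :=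
      pow_le_pow_left₀ (pow_nonneg (Real.exp_nonneg _) N) hp1 2
    have hval : (Real.exp (-(2 * (1 / (64 * Nr)))) ^ N) ^ 2
        = Real.exp ((N : ℝ) * -(4 * (1 / (64 * Nr)))) := by
      rw [← pow_mul, ← Real.exp_nat_mul]
      congr 1
      push_cast
      ring
    have hval2 : (N : ℝ) * -(4 * (1 / (64 * Nr))) = -(1 / 16 : ℝ) := by
      rw [← hNr_def]
      field_simp
      ring
    have hmono : Real.exp (-(1 / 2 : ℝ)) ≤ Real.exp (-(1 / 16 : ℝ)) :=
      Real.exp_le_exp.2 (by norm_num)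
    rw [hval, hval2] at hp2
    linarith only [hp2, hmono]
  have hminsum : Real.exp (-(1 / 2 : ℝ)) / 2 ≤
      ∑ x : Fin N → Fin 3, min (∏ i, (![ρ + ε, cc - ε, cc] : Fin 3 → ℝ) (x i))
        (∏ i, (![ρ - ε, cc + ε, cc] : Fin 3 → ℝ) (x i)) := by
    have hmg := sum_min_ge _ _ hP1nn hP2nn hsum1 hsum2
    rw [hαsum] at hmg
    linarith only [hmg, hα2N]
  -- put the lower bound together
  have hκ0 : 0 ≤ (b + h) * ε * a := by positivity
  have hfinal : 2 * (lam * (b + h) * sQ * m * Real.exp (-(1 / 2 : ℝ)) / (64 * sN))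
      ≤ r1 + r2 := by
    have h1 : ((b + h) * ε * a) * (Real.exp (-(1 / 2 : ℝ)) / 2)
        ≤ ((b + h) * ε * a) *
          (∑ x : Fin N → Fin 3, min (∏ i, (![ρ + ε, cc - ε, cc] : Fin 3 → ℝ) (x i))
            (∏ i, (![ρ - ε, cc + ε, cc] : Fin 3 → ℝ) (x i))) :=
      mul_le_mul_of_nonneg_left hminsum hκ0
    have h2 : 2 * (lam * (b + h) * sQ * m * Real.exp (-(1 / 2 : ℝ)) / (64 * sN))
        = ((b + h) * ε * a) * (Real.exp (-(1 / 2 : ℝ)) / 2) := by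
      rw [hε_def, ha_def]
      field_simp
      ring
    rw [h2]
    exact le_trans h1 hcentral
  -- memberships and boundedness of the objective set
  have hρlt1 : ρ < (G1 (Iio lam)).toReal := by
    rw [hG1def, matom3_Iio_mid _ _ _ _ _ ha0 halam hlamM.le,
      ENNReal.toReal_add ENNReal.ofReal_ne_top ENNReal.ofReal_ne_top,
      ENNReal.toReal_ofReal (by linarith), ENNReal.toReal_ofReal (by linarith)]
    linarith only [hcc0, hε0, hεcc]
  have hρlt2 : ρ < (G2 (Iio lam)).toReal := by
    rw [hG2def, matom3_Iio_mid _ _ _ _ _ ha0 halam hlamM.le,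
      ENNReal.toReal_add ENNReal.ofReal_ne_top ENNReal.ofReal_ne_top,
      ENNReal.toReal_ofReal (by linarith), ENNReal.toReal_ofReal (by linarith)]
    linarith only [hcc0, hε0, hεcc]
  have hSbdd : BddAbove {r : ℝ | ∃ G ∈ GoodDist ρ M, ρ < (G (Iio lam)).toReal ∧
      r = ∫ d, (Regret b h ρ M G lam (π fun i => min (d i) lam)
                  - Risk b h ρ M G lam) ∂(iidPi N G)} := by
    refine ⟨2 * ((b + h) * M), ?_⟩
    rintro r ⟨G, hG, _, rfl⟩
    by_cases hid : Integrable (fun d => Regret b h ρ M G lam (π fun i => min (d i) lam)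
        - Risk b h ρ M G lam) (iidPi N G)
    · haveI hGp : IsProbabilityMeasure G := hG.1
      have hiid : iidPi N G = Measure.pi (fun _ : Fin N => G) := by
        haveI hsf : SigmaFinite G := inferInstance
        rw [iidPi]; exact dif_pos hsf
      haveI : IsProbabilityMeasure (iidPi N G) := by
        rw [hiid]; infer_instance
      calc ∫ d, (Regret b h ρ M G lam (π fun i => min (d i) lam)
              - Risk b h ρ M G lam) ∂(iidPi N G)
          ≤ ∫ _, 2 * ((b + h) * M) ∂(iidPi N G) := by
            refine integral_mono hid (integrable_const _) fun d => ?_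
            have hr := regret_le (lam := lam) hb hh hρ0 hG (hrange (fun i => min (d i) lam))
            have hri := risk_ge (lam := lam) hb hh hρ0 hM0.le hG
            simp only
            linarith only [hr, hri]
        _ = 2 * ((b + h) * M) := by
            rw [integral_const, probReal_univ, one_smul]
    · rw [integral_undef hid]
      positivity
  have hmem1 : r1 ∈ {r : ℝ | ∃ G ∈ GoodDist ρ M, ρ < (G (Iio lam)).toReal ∧
      r = ∫ d, (Regret b h ρ M G lam (π fun i => min (d i) lam)
                  - Risk b h ρ M G lam) ∂(iidPi N G)} :=
    ⟨G1, hG1good, hρlt1, hr1def⟩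
  have hmem2 : r2 ∈ {r : ℝ | ∃ G ∈ GoodDist ρ M, ρ < (G (Iio lam)).toReal ∧
      r = ∫ d, (Regret b h ρ M G lam (π fun i => min (d i) lam)
                  - Risk b h ρ M G lam) ∂(iidPi N G)} :=
    ⟨G2, hG2good, hρlt2, hr2def⟩
  rcases le_total r1 r2 with hc | hc
  · exact le_trans (by linarith only [hfinal, hc]) (le_csSup hSbdd hmem2)
  · exact le_trans (by linarith only [hfinal, hc]) (le_csSup hSbdd hmem1)
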